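/- In ℰ_n(u), for all i, j with |i−j| = 1, writing T_k⁻¹ := T_k + (u−1)E_kT_k + (1−u)E_k, one has T_i⁻¹E_jT_i = T_j⁻¹E_iT_j. -/

import Mathlib

noncomputable section

open FreeAlgebra

/-- The base field `K = ℂ(u)`, the field of rational functions over `ℂ`. -/
abbrev K : Type := RatFunc ℂ

/-- The distinguished element `u` of `K = ℂ(u)`. -/
def u : K := RatFunc.X

/-- Generators of the algebra `ℰ_n(u)`: `T i` and `E i` for `i` ranging over `n - 1` indices. -/
inductive Gen (n : ℕ) : Type
  | T : Fin (n - 1) → Gen n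
  | E : Fin (n - 1) → Gen n

/-- The free `K`-algebra on the generators. -/
abbrev FA (n : ℕ) : Type := FreeAlgebra K (Gen n)

def fT {n : ℕ} (i : Fin (n - 1)) : FA n := ι K (Gen.T i)
def fE {n : ℕ} (i : Fin (n - 1)) : FA n := ι K (Gen.E i)

/-- The defining relations of `ℰ_n(u)`. -/
inductive EnRel (n : ℕ) : FA n → FA n → Prop
  | TTfar {i j : Fin (n - 1)} : 1 < Nat.dist i j →
      EnRel n (fT i * fT j) (fT j * fT i)
  | braid {i j : Fin (n - 1)} : Nat.dist i j = 1 →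
      EnRel n (fT i * fT j * fT i) (fT j * fT i * fT j)
  | Eidem (i : Fin (n - 1)) : EnRel n (fE i * fE i) (fE i)
  | EE (i j : Fin (n - 1)) : EnRel n (fE i * fE j) (fE j * fE i)
  | ET (i : Fin (n - 1)) : EnRel n (fE i * fT i) (fT i * fE i)
  | ETfar {i j : Fin (n - 1)} : 1 < Nat.dist i j →
      EnRel n (fE i * fT j) (fT j * fE i)
  | ETT {i j : Fin (n - 1)} : Nat.dist i j = 1 →
      EnRel n (fE j * (fT i * fT j)) (fT i * fT j * fE i)
  | EET {i j : Fin (n - 1)} : Nat.dist i j = 1 →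
      EnRel n (fE i * fE j * fT j) (fE i * fT j * fE i)
  | ETE {i j : Fin (n - 1)} : Nat.dist i j = 1 →
      EnRel n (fE i * fT j * fE i) (fT j * (fE i * fE j))
  | Tsq (i : Fin (n - 1)) :
      EnRel n (fT i * fT i) (1 + (u⁻¹ - 1) • (fE i * (1 - fT i)))

/-- The algebra `ℰ_n(u)`, as a quotient of the free algebra by the defining relations. -/
abbrev En (n : ℕ) : Type := RingQuot (EnRel n)

/-- The generator `T i` of `ℰ_n(u)`. -/
def T {n : ℕ} (i : Fin (n - 1)) : En n := RingQuot.mkAlgHom K (EnRel n) (fT i)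

/-- The generator `E i` of `ℰ_n(u)`. -/
def E {n : ℕ} (i : Fin (n - 1)) : En n := RingQuot.mkAlgHom K (EnRel n) (fE i)

/-- The element `T_k⁻¹ := T_k + (u-1) E_k T_k + (1-u) E_k`, which is a two-sided
inverse of `T_k` in `ℰ_n(u)`. -/
def Tinv {n : ℕ} (k : Fin (n - 1)) : En n :=
  T k + (u - 1) • (E k * T k) + (1 - u) • E k


section Aux

attribute [local instance 2000] Semiring.toNatAlgebra Ring.toIntAlgebra

variable {n : ℕ}

lemma hu0 : (u : K) ≠ 0 := RatFunc.X_ne_zero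

lemma qrel {a b : FA n} (h : EnRel n a b) :
    RingQuot.mkAlgHom K (EnRel n) a = RingQuot.mkAlgHom K (EnRel n) b :=
  RingQuot.mkAlgHom_rel K h

lemma hET (i : Fin (n-1)) : (E i : En n) * T i = T i * E i := by
  simpa [E, T, map_mul] using qrel (EnRel.ET i)

lemma hEidem (i : Fin (n-1)) : (E i : En n) * E i = E i := by
  simpa [E, map_mul] using qrel (EnRel.Eidem i)

lemma hEE (i j : Fin (n-1)) : (E i : En n) * E j = E j * E i := by
  simpa [E, map_mul] using qrel (EnRel.EE i j)

lemma hETT {i j : Fin (n-1)} (h : Nat.dist i j = 1) :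
    (E j : En n) * (T i * T j) = T i * T j * E i := by
  simpa [E, T, map_mul] using qrel (EnRel.ETT h)

lemma hEET {i j : Fin (n-1)} (h : Nat.dist i j = 1) :
    (E i : En n) * E j * T j = E i * T j * E i := by
  simpa [E, T, map_mul] using qrel (EnRel.EET h)

lemma hETE {i j : Fin (n-1)} (h : Nat.dist i j = 1) :
    (E i : En n) * T j * E i = T j * (E i * E j) := by
  simpa [E, T, map_mul] using qrel (EnRel.ETE h)

lemma hTsq (i : Fin (n-1)) :
    (T i : En n) * T i = 1 + (u⁻¹ - 1) • (E i * (1 - T i)) := by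
  simpa [E, T, map_mul, map_add, map_sub, map_one, map_smul] using qrel (EnRel.Tsq i)

lemma hEsq (i : Fin (n-1)) :
    (E i : En n) * (T i * T i) = u⁻¹ • E i + (1 - u⁻¹) • (E i * T i) := by
  rw [hTsq i]
  simp only [mul_add, mul_sub, mul_one, mul_smul_comm, ← mul_assoc, hEidem]
  match_scalars <;> ring

lemma T_mul_Tinv (i : Fin (n-1)) : (T i : En n) * Tinv i = 1 := by
  have h0 : (u : K) ≠ 0 := hu0
  rw [Tinv, mul_add, mul_add, mul_smul_comm, mul_smul_comm, ← mul_assoc, ← hET,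
    mul_assoc, hEsq, hTsq]
  simp only [mul_sub, mul_one, smul_add, smul_sub, smul_smul]
  match_scalars <;> field_simp <;> ring

lemma Tinv_mul_T (i : Fin (n-1)) : (Tinv i : En n) * T i = 1 := by
  have h0 : (u : K) ≠ 0 := hu0
  rw [Tinv, add_mul, add_mul, smul_mul_assoc, smul_mul_assoc, mul_assoc, hEsq, hTsq]
  simp only [mul_sub, mul_one, smul_add, smul_sub, smul_smul]
  match_scalars <;> field_simp <;> ring

lemma hcomm {i j : Fin (n-1)} (h : Nat.dist i j = 1) :
    (E i : En n) * (T j * T j) = T j * T j * E i := by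
  have h1 : (E i : En n) * E j * T j = T j * (E i * E j) := (hEET h).trans (hETE h)
  have h2 : (E j : En n) * T j * E i = T j * (E i * E j) := by
    rw [hET, mul_assoc, hEE]
  rw [hTsq j]
  simp only [mul_add, add_mul, mul_one, one_mul, mul_sub, sub_mul, mul_smul_comm,
    smul_mul_assoc, ← mul_assoc]
  rw [hEE, h1, ← mul_assoc] at *
  rw [h2]

lemma conj1 {i j : Fin (n-1)} (hij : Nat.dist i j = 1) :
    (Tinv i : En n) * E j * T i = T j * E i * Tinv j := by
  calc (Tinv i : En n) * E j * T i
      = Tinv i * E j * T i * (T j * Tinv j) := by rw [T_mul_Tinv, mul_one]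
    _ = Tinv i * (E j * (T i * T j)) * Tinv j := by simp only [mul_assoc]
    _ = Tinv i * (T i * T j * E i) * Tinv j := by rw [hETT hij]
    _ = Tinv i * T i * (T j * E i * Tinv j) := by simp only [mul_assoc]
    _ = T j * E i * Tinv j := by rw [Tinv_mul_T, one_mul]

lemma conj2 {i j : Fin (n-1)} (hij : Nat.dist i j = 1) :
    (Tinv j : En n) * E i * T j = T j * E i * Tinv j := by
  calc (Tinv j : En n) * E i * T j
      = Tinv j * E i * T j * (T j * Tinv j) := by rw [T_mul_Tinv, mul_one]
    _ = Tinv j * (E i * (T j * T j)) * Tinv j := by simp only [mul_assoc]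
    _ = Tinv j * (T j * T j * E i) * Tinv j := by rw [hcomm hij]
    _ = Tinv j * T j * (T j * E i * Tinv j) := by simp only [mul_assoc]
    _ = T j * E i * Tinv j := by rw [Tinv_mul_T, one_mul]

end Aux

/-- For `|i - j| = 1`: `T_i⁻¹ E_j T_i = T_j⁻¹ E_i T_j`. -/
theorem stmt9 (n : ℕ) (hn : 2 ≤ n) (i j : Fin (n - 1)) (hij : Nat.dist i j = 1) :
    Tinv i * E j * T i = Tinv j * E i * T j := by
  rw [conj1 hij, conj2 hij]
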